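/- Let 0 < a < b, ℓ > 0, and let κ : ℝ → ℝ be continuous, nonnegative, vanishing outside (a,b), with ∫_a^b κ(x) dx = 1 and κ(x) ≤ 2/(ℓ x) for every x > 0. Define f(z) = ∫_0^{|z|} (∫_0^y κ(x) dx) dy. Then for all c, x ∈ ℝ, |f(c+x) − f(c) − f'(c)·x| ≤ x² ∫_0^1 κ(|c+ux|)(1−u) du; moreover, if c + ux ≠ 0 for every u ∈ [0,1], then x² ∫_0^1 κ(|c+ux|)(1−u) du ≤ (2/ℓ) x² ∫_0^1 (1−u)/|c+ux| du. -/

import Mathlib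

open Real MeasureTheory

theorem stmt_2 (a b ℓ : ℝ) (ha : 0 < a) (hab : a < b) (hℓ : 0 < ℓ)
    (κ : ℝ → ℝ) (hκc : Continuous κ) (hκ0 : ∀ x, 0 ≤ κ x)
    (hκsupp : ∀ x, x ∉ Set.Ioo a b → κ x = 0)
    (hκint : ∫ x in a..b, κ x = 1)
    (hκbd : ∀ x > (0:ℝ), κ x ≤ 2 / (ℓ * x))
    (f : ℝ → ℝ)
    (hf : ∀ z, f z = ∫ y in (0:ℝ)..|z|, ∫ x in (0:ℝ)..y, κ x)
    (c x : ℝ) :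
    |f (c + x) - f c - deriv f c * x| ≤
        x ^ 2 * ∫ u in (0:ℝ)..1, κ |c + u * x| * (1 - u) ∧
      ((∀ u ∈ Set.Icc (0:ℝ) 1, c + u * x ≠ 0) →
        x ^ 2 * ∫ u in (0:ℝ)..1, κ |c + u * x| * (1 - u) ≤
          (2 / ℓ) * x ^ 2 * ∫ u in (0:ℝ)..1, (1 - u) / |c + u * x|) := by
  set F : ℝ → ℝ := fun y => ∫ t in (0:ℝ)..y, κ t with hF
  -- κ vanishes on nonpositive reals
  have hκneg : ∀ t ≤ (0:ℝ), κ t = 0 := fun t ht =>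
    hκsupp t (fun h => absurd (lt_trans ha h.1) (not_lt.2 ht))
  have hFneg : ∀ y ≤ (0:ℝ), F y = 0 := by
    intro y hy
    have : ∀ t ∈ Set.uIcc (0:ℝ) y, κ t = (fun _ => (0:ℝ)) t := by
      intro t ht
      rcases Set.mem_uIcc.1 ht with h | h
      · exact hκneg t (h.2.trans hy)
      · exact hκneg t h.2
    simp [hF, intervalIntegral.integral_congr this]
  set G : ℝ → ℝ := fun z => F z - F (-z) with hG
  have hFcont : Continuous F :=
    continuous_iff_continuousAt.2 fun z =>
      ((hκc.integral_hasStrictDerivAt 0 z).hasDerivAt).continuousAt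
  have hGcont : Continuous G := hFcont.sub (hFcont.comp continuous_neg)
  -- f z = ∫_0^z G
  have hfG : ∀ z, f z = ∫ y in (0:ℝ)..z, G y := by
    intro z
    rcases le_or_gt 0 z with hz | hz
    · rw [hf z, abs_of_nonneg hz]
      apply intervalIntegral.integral_congr
      intro y hy
      rw [Set.uIcc_of_le hz] at hy
      have : F (-y) = 0 := hFneg _ (by linarith [hy.1])
      simp [hG, this]
      rfl
    · rw [hf z, abs_of_neg hz]
      have h1 : ∀ y ∈ Set.uIcc z (0:ℝ), G y = (fun t => -F (-t)) y := by
        intro y hy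
        rw [Set.uIcc_of_le hz.le] at hy
        have : F y = 0 := hFneg _ hy.2
        simp [hG, this]
      have h2 : (∫ y in (0:ℝ)..z, G y) = ∫ y in (0:ℝ)..(-z), F y := by
        rw [intervalIntegral.integral_symm, intervalIntegral.integral_congr h1,
          intervalIntegral.integral_neg, neg_neg,
          intervalIntegral.integral_comp_neg (fun t => F t), neg_zero]
      rw [h2]
  -- derivative of f
  have hfderiv : ∀ z, HasDerivAt f (G z) z := by
    intro z
    have : HasDerivAt (fun w => ∫ y in (0:ℝ)..w, G y) (G z) z :=
      (hGcont.integral_hasStrictDerivAt 0 z).hasDerivAt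
    exact this.congr_of_eventuallyEq (Filter.Eventually.of_forall fun w => hfG w)
  -- derivative of G
  have hκsum : ∀ z:ℝ, κ z + κ (-z) = κ |z| := by
    intro z
    rcases le_or_gt z 0 with hz | hz
    · rw [hκneg z hz, abs_of_nonpos hz]; ring
    · rw [hκneg (-z) (by linarith), abs_of_pos hz]; ring
  have hGderiv : ∀ z, HasDerivAt G (κ |z|) z := by
    intro z
    have h1 : HasDerivAt F (κ z) z := (hκc.integral_hasStrictDerivAt 0 z).hasDerivAt
    have h2 : HasDerivAt (fun w : ℝ => F (-w)) (-κ (-z)) z := by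
      have := ((hκc.integral_hasStrictDerivAt 0 (-z)).hasDerivAt).comp z (hasDerivAt_neg z)
      rw [mul_neg_one] at this
      exact this
    have := h1.sub h2
    rw [← hκsum z]
    rw [sub_neg_eq_add] at this
    exact this
  -- Taylor identity via FTC on φ
  set φ : ℝ → ℝ := fun u => (1 - u) * (x * G (c + u * x)) + f (c + u * x) with hφ
  have hφderiv : ∀ u : ℝ, HasDerivAt φ (x ^ 2 * (κ |c + u * x| * (1 - u))) u := by
    intro u
    have hcu : HasDerivAt (fun u : ℝ => c + u * x) x u := by
      simpa using ((hasDerivAt_id u).mul_const x).const_add c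
    have hGc : HasDerivAt (fun u : ℝ => G (c + u * x)) (κ |c + u * x| * x) u := by
      have := (hGderiv (c + u * x)).comp u hcu
      exact this
    have hfc : HasDerivAt (fun u : ℝ => f (c + u * x)) (G (c + u * x) * x) u :=
      (hfderiv (c + u * x)).comp u hcu
    have h1 : HasDerivAt (fun u : ℝ => (1 - u) * (x * G (c + u * x)))
        ((-1) * (x * G (c + u * x)) + (1 - u) * (x * (κ |c + u * x| * x))) u := by
      have := ((hasDerivAt_const u (1:ℝ)).sub (hasDerivAt_id u)).mul (hGc.const_mul x)
      simp only [id_eq, zero_sub] at this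
      exact this
    have := h1.add hfc
    rw [show x ^ 2 * (κ |c + u * x| * (1 - u)) = -1 * (x * G (c + u * x)) +
        (1 - u) * (x * (κ |c + u * x| * x)) + G (c + u * x) * x by ring]
    exact this
  have hcontφ' : Continuous fun u : ℝ => x ^ 2 * (κ |c + u * x| * (1 - u)) := by
    fun_prop
  have key : f (c + x) - f c - G c * x =
      x ^ 2 * ∫ u in (0:ℝ)..1, κ |c + u * x| * (1 - u) := by
    have h := intervalIntegral.integral_eq_sub_of_hasDerivAt
      (fun u _ => hφderiv u) (hcontφ'.intervalIntegrable 0 1)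
    rw [intervalIntegral.integral_const_mul] at h
    rw [h]
    simp only [hφ]
    norm_num
    ring
  have hderivfc : deriv f c = G c := (hfderiv c).deriv
  have hintnonneg : 0 ≤ ∫ u in (0:ℝ)..1, κ |c + u * x| * (1 - u) := by
    apply intervalIntegral.integral_nonneg (by norm_num)
    intro u hu
    exact mul_nonneg (hκ0 _) (by linarith [hu.2])
  constructor
  · rw [hderivfc, key, abs_of_nonneg (mul_nonneg (sq_nonneg x) hintnonneg)]
  · intro hne
    have hineq : (∫ u in (0:ℝ)..1, κ |c + u * x| * (1 - u)) ≤
        ∫ u in (0:ℝ)..1, (2 / ℓ) * ((1 - u) / |c + u * x|) := by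
      apply intervalIntegral.integral_mono_on (by norm_num)
      · exact ((hκc.comp (continuous_abs.comp (by fun_prop))).mul (by fun_prop)).intervalIntegrable 0 1
      · apply ContinuousOn.intervalIntegrable
        apply ContinuousOn.mul continuousOn_const
        apply ContinuousOn.div (by fun_prop) (by fun_prop)
        intro u hu
        rw [Set.uIcc_of_le (by norm_num : (0:ℝ) ≤ 1)] at hu
        exact abs_ne_zero.2 (hne u hu)
      · intro u hu
        have habs : 0 < |c + u * x| := abs_pos.2 (hne u hu)
        have hb := hκbd |c + u * x| habs
        have h1u : 0 ≤ 1 - u := by linarith [hu.2]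
        calc κ |c + u * x| * (1 - u) ≤ 2 / (ℓ * |c + u * x|) * (1 - u) :=
              mul_le_mul_of_nonneg_right hb h1u
          _ = 2 / ℓ * ((1 - u) / |c + u * x|) := by
              field_simp
    rw [intervalIntegral.integral_const_mul] at hineq
    have hx2 : (0:ℝ) ≤ x ^ 2 := sq_nonneg x
    calc x ^ 2 * ∫ u in (0:ℝ)..1, κ |c + u * x| * (1 - u)
        ≤ x ^ 2 * (2 / ℓ * ∫ u in (0:ℝ)..1, (1 - u) / |c + u * x|) :=
          mul_le_mul_of_nonneg_left hineq hx2
      _ = 2 / ℓ * x ^ 2 * ∫ u in (0:ℝ)..1, (1 - u) / |c + u * x| := by ring
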